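/- Let A be a finite abelian group with minimal number of generators r. Then any finite family of cosets of subgroups of A, such that every subfamily of size at most 1 + r has nonempty intersection, itself has nonempty intersection. In other words, the Helly dimension of A is at most 1 + rk(A). -/

import Mathlib

open Pointwise

lemma coset_combine {A : Type*} [CommGroup A] {ι : Type*} (S : Finset ι) (g : ι → A)
    (H : ι → Subgroup A) {m n : ℤ} (a b : ℤ)
    (h1 : ∃ x, ∀ i ∈ S, (g i ^ m)⁻¹ * x ∈ H i)
    (h2 : ∃ x, ∀ i ∈ S, (g i ^ n)⁻¹ * x ∈ H i) :
    ∃ x, ∀ i ∈ S, (g i ^ (a * m + b * n))⁻¹ * x ∈ H i := by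
  obtain ⟨x, hx⟩ := h1
  obtain ⟨y, hy⟩ := h2
  refine ⟨x ^ a * y ^ b, fun i hi => ?_⟩
  have : (g i ^ (a * m + b * n))⁻¹ * (x ^ a * y ^ b)
      = ((g i ^ m)⁻¹ * x) ^ a * ((g i ^ n)⁻¹ * y) ^ b := by
    rw [mul_zpow, mul_zpow, mul_mul_mul_comm, inv_zpow, inv_zpow, ← zpow_mul, ← zpow_mul,
      ← mul_inv, ← zpow_add]
    congr 2
    ring_nf
  rw [this]
  exact mul_mem (Subgroup.zpow_mem _ (hx i hi) a) (Subgroup.zpow_mem _ (hy i hi) b)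

lemma gcd_combine {A : Type*} [CommGroup A] {ι : Type*} (S : Finset ι) (g : ι → A)
    (H : ι → Subgroup A) (F : Finset ℕ)
    (hF : ∀ q ∈ F, ∃ x, ∀ i ∈ S, (g i ^ (q : ℤ))⁻¹ * x ∈ H i) :
    ∃ x, ∀ i ∈ S, (g i ^ ((F.gcd id : ℕ) : ℤ))⁻¹ * x ∈ H i := by
  classical
  induction F using Finset.induction_on with
  | empty =>
    refine ⟨1, fun i hi => ?_⟩
    simp only [Finset.gcd_empty, Nat.cast_zero, zpow_zero, inv_one, one_mul]
    exact one_mem _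
  | @insert q F' hq ih =>
    have h1 := hF q (Finset.mem_insert_self _ _)
    have h2 := ih (fun q' hq' => hF q' (Finset.mem_insert_of_mem hq'))
    rw [Finset.gcd_insert]
    set d : ℕ := F'.gcd id with hd
    have hbez : ((Nat.gcd q d : ℕ) : ℤ)
        = Int.gcdA q d * q + Int.gcdB q d * d := by
      have h := Int.gcd_eq_gcd_ab (q : ℤ) (d : ℤ)
      rw [Int.gcd_natCast_natCast] at h
      rw [h]; ring
    have h3 := coset_combine S g H (Int.gcdA q d) (Int.gcdB q d) h1 h2
    rw [← hbez] at h3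
    exact h3

lemma helly_core {A : Type*} [CommGroup A] [Finite A] {ι : Type*} [DecidableEq ι]
    (p : ℕ) (hp : p.Prime) (T : Finset ι) (y : ι → A) (H : ι → Subgroup A)
    (hord : ∀ i ∈ T, ∃ k, y i ^ p ^ k = 1)
    (hin : ∀ i ∈ T, ∀ j ∈ T, i ≠ j → y i ∈ H j)
    (hout : ∀ i ∈ T, y i ∉ H i)
    (S₀ : Finset A) (hgen : Subgroup.closure (S₀ : Set A) = ⊤) :
    T.card ≤ S₀.card := by
  classical
  haveI : Fact p.Prime := ⟨hp⟩
  haveI : NeZero p := ⟨hp.pos.ne'⟩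
  haveI : Fact (1 < p) := ⟨hp.one_lt⟩
  set K : Subgroup A := ⨅ i ∈ T, H i with hK
  have hKmem : ∀ x : A, x ∈ K ↔ ∀ i ∈ T, x ∈ H i := by
    intro x; simp [hK, Subgroup.mem_iInf]
  have hKle : ∀ i ∈ T, K ≤ H i := fun i hi x hx => (hKmem x).mp hx i hi
  set P : ι → ℕ → Prop := fun i s => y i ^ p ^ s ∈ K with hP
  have hPex : ∀ i ∈ T, ∃ s, P i s := by
    intro i hi
    obtain ⟨k, hk⟩ := hord i hi
    exact ⟨k, by rw [hP]; simp only; rw [hk]; exact one_mem K⟩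
  set t : ι → ℕ := fun i => if h : ∃ s, P i s then Nat.find h else 0 with ht
  have htspec : ∀ i ∈ T, y i ^ p ^ t i ∈ K := by
    intro i hi
    have h := hPex i hi
    simp only [ht, dif_pos h]
    exact Nat.find_spec h
  have htmin : ∀ i ∈ T, ∀ s < t i, y i ^ p ^ s ∉ K := by
    intro i hi s hs
    have h := hPex i hi
    simp only [ht, dif_pos h] at hs ⊢
    exact Nat.find_min h hs
  have htpos : ∀ i ∈ T, 1 ≤ t i := by
    intro i hi
    by_contra hc
    have h0 : t i = 0 := by omega
    have := htspec i hi
    rw [h0, pow_zero, pow_one] at this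
    exact hout i hi (hKle i hi this)
  set z : ι → A := fun i => y i ^ p ^ (t i - 1) with hz
  set B := A ⧸ K with hB
  set π : A →* B := QuotientGroup.mk' K with hπ
  set Φ : (↥T → ZMod p) → B := fun c => π (∏ i ∈ T.attach, z ↑i ^ (c i).val) with hΦ
  have hzH : ∀ i ∈ T, ∀ j ∈ T, j ≠ i → z j ∈ H i := by
    intro i hi j hj hne
    exact pow_mem (hin j hj i hi hne) _
  have hzK : ∀ i ∈ T, z i ^ p ∈ K := by
    intro i hi
    have : z i ^ p = y i ^ p ^ t i := by
      rw [hz]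
      simp only
      rw [← pow_mul, ← pow_succ]
      congr 2
      have := htpos i hi
      omega
    rw [this]
    exact htspec i hi
  -- main divisibility step
  have hdvd : ∀ i ∈ T, ∀ e : ℤ, (z i) ^ e ∈ K → (p : ℤ) ∣ e := by
    intro i hi e he
    by_contra hnd
    have hnd' : ¬ p ∣ e.natAbs := fun h => hnd (Int.dvd_natAbs.mp (Int.natCast_dvd_natCast.mpr h))
    have hcop : IsCoprime (e : ℤ) (p : ℤ) := by
      rw [Int.isCoprime_iff_gcd_eq_one, Int.gcd, Int.natAbs_natCast]
      exact Nat.coprime_comm.mp (hp.coprime_iff_not_dvd.mpr hnd')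
    obtain ⟨a, b, hab⟩ := hcop
    have h1 : (y i) ^ ((p:ℤ) ^ (t i - 1) * e) ∈ K := by
      have heq : (z i) ^ e = (y i) ^ ((p:ℤ) ^ (t i - 1) * e) := by
        rw [hz]
        simp only
        rw [← zpow_natCast (y i) (p ^ (t i - 1)), ← zpow_mul]
        push_cast
        ring_nf
      rwa [heq] at he
    have h2 : (y i) ^ ((p:ℤ) ^ (t i)) ∈ K := by
      have := htspec i hi
      rwa [← zpow_natCast (y i) (p ^ t i), Nat.cast_pow] at this
    have h3 : (y i) ^ ((p:ℤ) ^ (t i - 1)) ∈ K := by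
      have hsucc : t i = (t i - 1) + 1 := by have := htpos i hi; omega
      have hexp : (p:ℤ) ^ (t i - 1) = ((p:ℤ) ^ (t i - 1) * e) * a + ((p:ℤ) ^ (t i)) * b := by
        have hpt : (p:ℤ) ^ (t i) = (p:ℤ) ^ (t i - 1) * p := by
          conv_lhs => rw [hsucc]
          rw [pow_succ]
        have hring : (p:ℤ) ^ (t i - 1) * (a * e + b * (p:ℤ))
            = ((p:ℤ) ^ (t i - 1) * e) * a + ((p:ℤ) ^ (t i - 1) * (p:ℤ)) * b := by ring
        rw [hpt, ← hring, hab, mul_one]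
      rw [hexp, zpow_add]
      exact mul_mem (by rw [zpow_mul]; exact Subgroup.zpow_mem _ h1 a)
        (by rw [zpow_mul]; exact Subgroup.zpow_mem _ h2 b)
    have h4 : y i ^ p ^ (t i - 1) ∈ K := by
      rwa [← zpow_natCast (y i) (p ^ (t i - 1)), Nat.cast_pow]
    exact htmin i hi (t i - 1) (by have := htpos i hi; omega) h4
  -- injectivity
  have hinj : Function.Injective Φ := by
    intro c d hcd
    set e : ↥T → ℤ := fun i => ((d i).val : ℤ) - ((c i).val : ℤ) with he
    have hw : (∏ i ∈ T.attach, z ↑i ^ (c i).val)⁻¹ * ∏ i ∈ T.attach, z ↑i ^ (d i).val ∈ K := by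
      rw [← QuotientGroup.ker_mk' K, MonoidHom.mem_ker, map_mul, map_inv]
      rw [hΦ] at hcd
      simp only at hcd
      rw [← hπ, hcd]
      simp
    have hwprod : (∏ i ∈ T.attach, z ↑i ^ (c i).val)⁻¹ * ∏ i ∈ T.attach, z ↑i ^ (d i).val
        = ∏ i ∈ T.attach, z ↑i ^ e i := by
      rw [← Finset.prod_inv_distrib, ← Finset.prod_mul_distrib]
      refine Finset.prod_congr rfl fun i _ => ?_
      rw [he]
      simp only
      rw [zpow_sub, zpow_natCast, zpow_natCast]
      exact mul_comm _ _
    rw [hwprod] at hw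
    funext i
    have hiT : (i : ι) ∈ T := i.2
    have hrest : ∏ j ∈ T.attach.erase i, z ↑j ^ e j ∈ H ↑i := by
      refine Subgroup.prod_mem _ fun j hj => ?_
      refine Subgroup.zpow_mem _ (hzH ↑i hiT ↑j j.2 ?_) _
      exact fun h => (Finset.mem_erase.mp hj).1 (Subtype.ext h)
    have h1 : z ↑i ^ e i ∈ H ↑i := by
      have heq : z ↑i ^ e i = (∏ j ∈ T.attach, z ↑j ^ e j) *
          (∏ j ∈ T.attach.erase i, z ↑j ^ e j)⁻¹ := by
        rw [← Finset.mul_prod_erase T.attach _ (Finset.mem_attach T i)]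
        group
      rw [heq]
      exact mul_mem (hKle ↑i hiT hw) (inv_mem hrest)
    have h2 : z ↑i ^ e i ∈ K := by
      rw [hKmem]
      intro j hj
      by_cases hji : j = ↑i
      · subst hji; exact h1
      · exact Subgroup.zpow_mem _ (pow_mem (hin ↑i hiT j hj fun h => hji h.symm) _) _
    have hpd := hdvd ↑i hiT (e i) h2
    have he0 : e i = 0 := by
      refine Int.eq_zero_of_abs_lt_dvd hpd ?_
      have hc := ZMod.val_lt (c i)
      have hd := ZMod.val_lt (d i)
      rw [he]
      simp only
      rw [abs_lt]
      omega
    have : (d i).val = (c i).val := by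
      rw [he] at he0
      simp only at he0
      omega
    exact (ZMod.val_injective p this).symm
  -- Φ lands in the kernel of the p-th power map
  set f : B →* B := powMonoidHom p with hf
  have hΩ : ∀ c, Φ c ∈ f.ker := by
    intro c
    rw [MonoidHom.mem_ker, hf, powMonoidHom_apply, hΦ]
    simp only
    rw [← map_pow, ← Finset.prod_pow]
    rw [hπ, ← MonoidHom.mem_ker, QuotientGroup.ker_mk']
    refine Subgroup.prod_mem _ fun j _ => ?_
    rw [← pow_mul, mul_comm, pow_mul]
    exact pow_mem (hzK ↑j j.2) _
  -- lower bound
  set Φ' : (↥T → ZMod p) → ↥f.ker := fun c => ⟨Φ c, hΩ c⟩ with hΦ'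
  have hinj' : Function.Injective Φ' := fun c d hcd => hinj (congrArg Subtype.val hcd)
  have hlow : p ^ T.card ≤ Nat.card ↥f.ker := by
    have := Nat.card_le_card_of_injective Φ' hinj'
    rwa [Nat.card_fun, Nat.card_zmod, Nat.card_eq_finsetCard] at this
  -- |ker| = |coker|
  have hker_coker : Nat.card ↥f.ker = Nat.card (B ⧸ f.range) := by
    have e1 : Nat.card (B ⧸ f.ker) = Nat.card ↥f.range :=
      Nat.card_congr (QuotientGroup.quotientKerEquivRange f).toEquiv
    have e2 := Subgroup.card_eq_card_quotient_mul_card_subgroup f.ker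
    have e3 := Subgroup.card_eq_card_quotient_mul_card_subgroup f.range
    have hpos : 0 < Nat.card ↥f.range := Nat.card_pos
    rw [e1] at e2
    rw [e2] at e3
    rw [mul_comm (Nat.card (B ⧸ f.range)) (Nat.card ↥f.range)] at e3
    exact Nat.eq_of_mul_eq_mul_left hpos e3
  -- upper bound: B ⧸ f.range is generated by images of S₀ and has exponent p
  set κ : A →* B ⧸ f.range := (QuotientGroup.mk' f.range).comp π with hκ
  have hκsurj : Function.Surjective κ :=
    (QuotientGroup.mk'_surjective _).comp (QuotientGroup.mk'_surjective K)
  have hκp : ∀ u : A, κ u ^ p = 1 := by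
    intro u
    have : κ u ^ p = QuotientGroup.mk' f.range ((π u) ^ p) := by
      rw [map_pow]; rfl
    rw [this, ← MonoidHom.mem_ker, QuotientGroup.ker_mk']
    exact ⟨π u, by rw [hf, powMonoidHom_apply]⟩
  set F : (↥S₀ → ZMod p) → B ⧸ f.range := fun c => ∏ a ∈ S₀.attach, κ ↑a ^ (c a).val with hF
  have hFmul : ∀ c d, F c * F d = F (c + d) := by
    intro c d
    rw [hF]
    simp only
    rw [← Finset.prod_mul_distrib]
    refine Finset.prod_congr rfl fun a _ => ?_
    rw [← pow_add, pow_eq_pow_mod _ (hκp ↑a)]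
    congr 1
    rw [Pi.add_apply, ZMod.val_add]
  have hF0 : F 0 = 1 := by
    rw [hF]
    simp only [Pi.zero_apply, ZMod.val_zero, pow_zero]
    exact Finset.prod_const_one
  have hFsurj : Function.Surjective F := by
    intro x
    obtain ⟨u, rfl⟩ := hκsurj x
    have hu : u ∈ Subgroup.closure (S₀ : Set A) := by rw [hgen]; trivial
    refine Subgroup.closure_induction ?_ ?_ ?_ ?_ hu
    · intro v hv
      refine ⟨fun b => if b = ⟨v, hv⟩ then 1 else 0, ?_⟩
      rw [hF]
      simp only
      rw [Finset.prod_eq_single_of_mem (⟨v, hv⟩ : ↥S₀) (Finset.mem_attach _ _)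
        (fun b _ hb => by rw [if_neg hb, ZMod.val_zero, pow_zero])]
      rw [if_pos rfl, ZMod.val_one, pow_one]
    · exact ⟨0, by rw [map_one]; exact hF0⟩
    · rintro v w hv hw ⟨c, hc⟩ ⟨c', hc'⟩
      exact ⟨c + c', by rw [map_mul, ← hc, ← hc', hFmul]⟩
    · rintro v hv ⟨c, hc⟩
      refine ⟨-c, ?_⟩
      have h1 : F c * F (-c) = 1 := by rw [hFmul, add_neg_cancel, hF0]
      rw [map_inv, ← hc]
      exact eq_inv_of_mul_eq_one_right h1
  have hup : Nat.card (B ⧸ f.range) ≤ p ^ S₀.card := by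
    have := Nat.card_le_card_of_surjective F hFsurj
    rwa [Nat.card_fun, Nat.card_zmod, Nat.card_eq_finsetCard] at this
  have hfin : p ^ T.card ≤ p ^ S₀.card := by
    rw [hker_coker] at hlow
    omega
  exact (Nat.pow_le_pow_iff_right hp.one_lt).mp hfin

lemma comm_aux {A : Type*} [CommGroup A] (c a b : A) : (c⁻¹ * a) * (c⁻¹ * b)⁻¹ = a * b⁻¹ := by
  rw [mul_inv_rev, inv_inv, mul_comm c⁻¹ a, mul_assoc, ← mul_assoc c⁻¹ b⁻¹ c,
    mul_comm c⁻¹ b⁻¹, mul_assoc, inv_mul_cancel, mul_one]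

lemma gcd_ordCompl_eq_one {E : ℕ} (hE : 2 ≤ E) :
    (E.primeFactors.image (fun p => E / p ^ E.factorization p)).gcd id = 1 := by
  by_contra hne
  obtain ⟨ℓ, hℓp, hℓd⟩ := Nat.exists_prime_and_dvd hne
  have hE0 : E ≠ 0 := by omega
  have hdvd : ∀ p ∈ E.primeFactors, ℓ ∣ E / p ^ E.factorization p := by
    intro p hp
    exact hℓd.trans (Finset.gcd_dvd (Finset.mem_image_of_mem _ hp))
  obtain ⟨p₀, hp₀⟩ := (Nat.nonempty_primeFactors).mpr hE
  have hℓE : ℓ ∣ E := (hdvd p₀ hp₀).trans (Nat.ordCompl_dvd E p₀)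
  have hℓF : ℓ ∈ E.primeFactors := Nat.mem_primeFactors.mpr ⟨hℓp, hℓE, hE0⟩
  exact Nat.not_dvd_ordCompl hℓp hE0 (hdvd ℓ hℓF)

lemma helly_key {A : Type*} [CommGroup A] [Fintype A] {ι : Type*} [DecidableEq ι]
    (S : Finset ι) (g : ι → A) (H : ι → Subgroup A)
    (S₀ : Finset A) (hgen : Subgroup.closure (S₀ : Set A) = ⊤)
    (hS : S₀.card + 2 ≤ S.card)
    (hprop : ∀ i ∈ S, (⋂ j ∈ S.erase i, g j • (H j : Set A)).Nonempty) :
    (⋂ i ∈ S, g i • (H i : Set A)).Nonempty := by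
  classical
  by_contra hempty
  set E := Fintype.card A with hE
  have hE2 : 2 ≤ E := by
    by_contra h
    have hE1 : E = 1 := by have := Fintype.card_pos (α := A); omega
    have hsub : ∀ u w : A, u = w := fun u w => Fintype.card_le_one_iff.mp (le_of_eq hE1) u w
    refine hempty ⟨1, Set.mem_iInter₂.mpr fun i hi => ?_⟩
    exact ⟨1, one_mem _, by simp [hsub (g i) 1]⟩
  have hnot : ¬ ∀ p ∈ E.primeFactors,
      ∃ x, ∀ i ∈ S, (g i ^ ((E / p ^ E.factorization p : ℕ) : ℤ))⁻¹ * x ∈ H i := by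
    intro hall
    have hF : ∀ q ∈ E.primeFactors.image (fun p => E / p ^ E.factorization p),
        ∃ x, ∀ i ∈ S, (g i ^ ((q : ℕ) : ℤ))⁻¹ * x ∈ H i := by
      intro q hq
      obtain ⟨p, hp, rfl⟩ := Finset.mem_image.mp hq
      exact hall p hp
    have hQ1 := gcd_combine S g H _ hF
    rw [gcd_ordCompl_eq_one hE2] at hQ1
    obtain ⟨x, hx⟩ := hQ1
    refine hempty ⟨x, Set.mem_iInter₂.mpr fun i hi => mem_leftCoset_iff _ |>.mpr ?_⟩
    have := hx i hi
    rwa [Nat.cast_one, zpow_one] at this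
  push_neg at hnot
  obtain ⟨p, hpF, hpempty⟩ := hnot
  have hp : p.Prime := Nat.prime_of_mem_primeFactors hpF
  set q : ℕ := E / p ^ E.factorization p with hq
  set v : ℕ := E.factorization p with hv
  have hqpv : p ^ v * q = E := Nat.ordProj_mul_ordCompl_eq_self E p
  have hpe : ∀ x : A, ∃ i ∈ S, (g i ^ q)⁻¹ * x ∉ H i := by
    intro x
    obtain ⟨i, hi, hni⟩ := hpempty x
    refine ⟨i, hi, ?_⟩
    rwa [zpow_natCast] at hni
  have hwit : ∀ i, ∃ x : A, i ∈ S → (x ^ p ^ v = 1 ∧ ∀ j ∈ S.erase i, (g j ^ q)⁻¹ * x ∈ H j) := by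
    intro i
    by_cases hi : i ∈ S
    · obtain ⟨x', hx'⟩ := hprop i hi
      refine ⟨x' ^ q, fun _ => ⟨?_, fun j hj => ?_⟩⟩
      · rw [← pow_mul, mul_comm, hqpv, hE]
        exact pow_card_eq_one
      · have hx'j : (g j)⁻¹ * x' ∈ H j :=
          mem_leftCoset_iff _ |>.mp (Set.mem_iInter₂.mp hx' j hj)
        have heq : (g j ^ q)⁻¹ * x' ^ q = ((g j)⁻¹ * x') ^ q := by
          rw [mul_pow, inv_pow]
        rw [heq]
        exact pow_mem hx'j q
    · exact ⟨1, fun h => absurd h hi⟩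
  choose x hx using hwit
  obtain ⟨i₀, hi₀⟩ := Finset.card_pos.mp (by omega : 0 < S.card)
  set T := S.erase i₀ with hT
  set y : ι → A := fun i => x i * (x i₀)⁻¹ with hy
  have hTsub : ∀ i ∈ T, i ∈ S := fun i hi => Finset.mem_of_mem_erase hi
  have hord : ∀ i ∈ T, ∃ k, y i ^ p ^ k = 1 := by
    intro i hi
    refine ⟨v, ?_⟩
    show (x i * (x i₀)⁻¹) ^ p ^ v = 1
    rw [mul_pow, inv_pow, (hx i (hTsub i hi)).1, (hx i₀ hi₀).1]
    simp
  have hin : ∀ i ∈ T, ∀ j ∈ T, i ≠ j → y i ∈ H j := by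
    intro i hi j hj hij
    have h1 : (g j ^ q)⁻¹ * x i ∈ H j :=
      (hx i (hTsub i hi)).2 j (Finset.mem_erase.mpr ⟨fun h => hij h.symm, hTsub j hj⟩)
    have h2 : (g j ^ q)⁻¹ * x i₀ ∈ H j := (hx i₀ hi₀).2 j hj
    have heq : y i = ((g j ^ q)⁻¹ * x i) * ((g j ^ q)⁻¹ * x i₀)⁻¹ := (comm_aux _ _ _).symm
    rw [heq]
    exact mul_mem h1 (inv_mem h2)
  have hout : ∀ i ∈ T, y i ∉ H i := by
    intro i hi hyH
    obtain ⟨j, hjS, hjn⟩ := hpe (x i)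
    apply hjn
    by_cases hji : j = i
    · subst hji
      have h2 : (g j ^ q)⁻¹ * x i₀ ∈ H j := (hx i₀ hi₀).2 j hi
      have heq : (g j ^ q)⁻¹ * x j = ((g j ^ q)⁻¹ * x i₀) * y j := by
        show (g j ^ q)⁻¹ * x j = ((g j ^ q)⁻¹ * x i₀) * (x j * (x i₀)⁻¹)
        rw [mul_assoc, ← mul_assoc (x i₀), mul_comm (x i₀) (x j), mul_assoc,
          mul_inv_cancel, mul_one]
      rw [heq]
      exact mul_mem h2 hyH
    · exact (hx i (hTsub i hi)).2 j (Finset.mem_erase.mpr ⟨hji, hjS⟩)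
  have hcore := helly_core p hp T y H hord hin hout S₀ hgen
  have hTcard : T.card = S.card - 1 := Finset.card_erase_of_mem hi₀
  omega

/-- Helly dimension of a finite abelian group `A` is at most `1 + rk(A)`:
if every subfamily of at most `1 + r` cosets has nonempty intersection, where `r`
is the minimal number of generators of `A`, then the whole family has nonempty
intersection. -/
theorem helly_finite_abelian (A : Type*) [CommGroup A] [Fintype A] (r : ℕ)
    (hr : r = sInf {k | ∃ S : Finset A, S.card = k ∧ Subgroup.closure (S : Set A) = ⊤})
    (t : ℕ) (g : Fin t → A) (H : Fin t → Subgroup A)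
    (hsmall : ∀ S : Finset (Fin t), S.card ≤ 1 + r →
      (⋂ i ∈ S, g i • (H i : Set A)).Nonempty) :
    (⋂ i, g i • (H i : Set A)).Nonempty := by
  classical
  have hne : {k | ∃ S : Finset A, S.card = k ∧ Subgroup.closure (S : Set A) = ⊤}.Nonempty :=
    ⟨(Finset.univ : Finset A).card, Finset.univ, rfl,
      by rw [Finset.coe_univ, Subgroup.closure_univ]⟩
  obtain ⟨S₀, hcard, hgen⟩ : ∃ S₀ : Finset A, S₀.card = r ∧ Subgroup.closure (S₀ : Set A) = ⊤ := by
    have h := Nat.sInf_mem hne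
    rw [← hr] at h
    exact h
  have main : ∀ S : Finset (Fin t), (⋂ i ∈ S, g i • (H i : Set A)).Nonempty := by
    intro S
    induction S using Finset.strongInduction with
    | _ S ih =>
      by_cases hle : S.card ≤ 1 + r
      · exact hsmall S hle
      · refine helly_key S g H S₀ hgen (by omega) ?_
        intro i hi
        exact ih (S.erase i) (Finset.erase_ssubset hi)
  have h := main Finset.univ
  simpa using h
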